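/- Let t be an integer. There exists a collection C of subsets of F_2^t such that: (1) |C| ≤ 2^{t^2}; (2) every C ∈ C has |C| ≤ 2^{(t+1)/2}; (3) every set A ⊆ F_2^t with ⟨v1,v2⟩ ≠ 0 for all (not necessarily distinct) v1, v2 ∈ A is contained in some member of C. -/

import Mathlib

/-- The inner product `⟨x,y⟩ = ∑ i, x i * y i`. -/
def ip {F : Type*} [CommRing F] {ι : Type*} [Fintype ι] (x y : ι → F) : F :=
  ∑ i, x i * y i

/-- The inner product as a bilinear form on `F_2^t`. -/
noncomputable def Bform (t : ℕ) : LinearMap.BilinForm (ZMod 2) (Fin t → ZMod 2) :=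
  LinearMap.mk₂ (ZMod 2) ip
    (fun x y z => by simp [ip, add_mul, Finset.sum_add_distrib])
    (fun c x y => by simp [ip, Finset.mul_sum, mul_assoc])
    (fun x y z => by simp [ip, mul_add, Finset.sum_add_distrib])
    (fun c x y => by simp [ip, Finset.mul_sum, mul_left_comm])

lemma Bform_apply (t : ℕ) (x y : Fin t → ZMod 2) : Bform t x y = ip x y := rfl

lemma Bform_refl (t : ℕ) : (Bform t).IsRefl := by
  intro x y h
  simpa [Bform_apply, ip, mul_comm] using h

lemma Bform_nondeg (t : ℕ) : (Bform t).Nondegenerate := by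
  refine LinearMap.BilinForm.Nondegenerate.ofSeparatingLeft ?_
  intro x h
  funext i
  have := h (Pi.single i 1)
  simpa [Bform_apply, ip, Pi.single_apply, mul_ite, Finset.sum_ite_eq'] using this

lemma span_le_orthogonal (t : ℕ) (S : Set (Fin t → ZMod 2))
    (hS : ∀ x ∈ S, ∀ y ∈ S, ip x y = 0) :
    Submodule.span (ZMod 2) S ≤ (Bform t).orthogonal (Submodule.span (ZMod 2) S) := by
  rw [Submodule.span_le]
  intro x hx
  rw [SetLike.mem_coe, LinearMap.BilinForm.mem_orthogonal_iff]
  intro n hn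
  induction hn using Submodule.span_induction with
  | mem y hy => exact hS y hy x hx
  | zero => simp [LinearMap.BilinForm.IsOrtho]
  | add a b _ _ ha hb =>
      simp [map_add, LinearMap.add_apply, ha, hb]
  | smul c a _ ha =>
      simp [map_smul, LinearMap.smul_apply, ha]

lemma isotropic_finrank_le (t : ℕ) (S : Set (Fin t → ZMod 2))
    (hS : ∀ x ∈ S, ∀ y ∈ S, ip x y = 0) :
    2 * Module.finrank (ZMod 2) (Submodule.span (ZMod 2) S) ≤ t := by
  set W := Submodule.span (ZMod 2) S
  have h1 : Module.finrank (ZMod 2) W ≤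
      Module.finrank (ZMod 2) ((Bform t).orthogonal W) :=
    Submodule.finrank_mono (span_le_orthogonal t S hS)
  have h2 := LinearMap.BilinForm.finrank_orthogonal (Bform_nondeg t) W
  have h3 : Module.finrank (ZMod 2) (Fin t → ZMod 2) = t := Module.finrank_fin_fun _
  have h4 : Module.finrank (ZMod 2) W ≤ t := by
    have := Submodule.finrank_le W
    omega
  omega

lemma exists_spanning_fun {K V : Type*} [Field K] [AddCommGroup V] [Module K V]
    [FiniteDimensional K V] (W : Submodule K V) (m : ℕ)
    (hm : Module.finrank K W ≤ m) :
    ∃ g : Fin m → V, Submodule.span K (Set.range g) = W := by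
  classical
  set d := Module.finrank K W with hd
  let b := Module.finBasis K W
  refine ⟨fun i => if h : (i : ℕ) < d then (b ⟨i, h⟩ : V) else 0, ?_⟩
  apply le_antisymm
  · rw [Submodule.span_le]
    rintro x ⟨i, rfl⟩
    by_cases h : (i : ℕ) < d
    · simp only [h, dif_pos]
      exact (b ⟨i, h⟩).2
    · simp [h]
  · intro x hx
    have hb : x ∈ Submodule.span K (Set.range fun j : Fin d => (b j : V)) := by
      have : (⟨x, hx⟩ : W) ∈ (⊤ : Submodule K W) := trivial
      rw [← b.span_eq] at this
      have := Submodule.mem_map_of_mem (f := W.subtype) this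
      rw [Submodule.map_span] at this
      simpa [← Set.range_comp, Function.comp_def] using this
    refine Submodule.span_mono ?_ hb
    rintro y ⟨j, rfl⟩
    exact ⟨⟨(j : ℕ), by omega⟩, by simp [j.2]⟩

lemma ip_add_add {F : Type*} [CommRing F] {ι : Type*} [Fintype ι] (a b c d : ι → F) :
    ip (a + b) (c + d) = ip a c + ip a d + ip b c + ip b d := by
  simp only [ip, Pi.add_apply, add_mul, mul_add, Finset.sum_add_distrib]
  ring

theorem exists_covering_collection_F2 (t : ℕ) :
    ∃ 𝒞 : Finset (Finset (Fin t → ZMod 2)),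
      𝒞.card ≤ 2 ^ (t ^ 2) ∧
      (∀ C ∈ 𝒞, (C.card : ℝ) ≤ (2 : ℝ) ^ (((t : ℝ) + 1) / 2)) ∧
      (∀ A : Finset (Fin t → ZMod 2),
        (∀ v1 ∈ A, ∀ v2 ∈ A, ip v1 v2 ≠ 0) →
        ∃ C ∈ 𝒞, A ⊆ C) := by
  classical
  rcases eq_or_ne t 1 with rfl | ht1
  · -- t = 1 : take 𝒞 = {univ}
    refine ⟨{Finset.univ}, by norm_num, ?_, ?_⟩
    · intro C hC
      simp only [Finset.mem_singleton] at hC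
      subst hC
      have : (Finset.univ : Finset (Fin 1 → ZMod 2)).card = 2 := by
        simp [Finset.card_univ]
      rw [this]
      have : (((1 : ℕ) : ℝ) + 1) / 2 = 1 := by norm_num
      rw [this, Real.rpow_one]
      norm_num
    · intro A _
      exact ⟨Finset.univ, Finset.mem_singleton_self _, Finset.subset_univ A⟩
  · set m := (t + 1) / 2 with hm
    set coset : (Fin t → ZMod 2) × (Fin m → Fin t → ZMod 2) → Finset (Fin t → ZMod 2) :=
      fun p => Finset.image (fun c : Fin m → ZMod 2 => p.1 + ∑ i, c i • p.2 i) Finset.univ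
      with hcoset
    refine ⟨Finset.image coset Finset.univ, ?_, ?_, ?_⟩
    · -- cardinality of the collection
      calc (Finset.image coset Finset.univ).card
          ≤ (Finset.univ : Finset ((Fin t → ZMod 2) × (Fin m → Fin t → ZMod 2))).card :=
            Finset.card_image_le
        _ = 2 ^ t * (2 ^ t) ^ m := by
            simp [Finset.card_univ, Fintype.card_fun, ZMod.card]
        _ = 2 ^ (t * (1 + m)) := by ring
        _ ≤ 2 ^ (t ^ 2) := by
            apply Nat.pow_le_pow_right (by norm_num)
            rcases Nat.eq_zero_or_pos t with rfl | htpos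
            · simp
            · have h2 : 2 ≤ t := by omega
              have : 1 + m ≤ t := by omega
              calc t * (1 + m) ≤ t * t := Nat.mul_le_mul_left t this
                _ = t ^ 2 := (sq t).symm
    · -- size of each member
      intro C hC
      simp only [Finset.mem_image] at hC
      obtain ⟨p, -, rfl⟩ := hC
      have h1 : (coset p).card ≤ 2 ^ m := by
        calc (coset p).card ≤ (Finset.univ : Finset (Fin m → ZMod 2)).card :=
              Finset.card_image_le
          _ = 2 ^ m := by simp [Finset.card_univ, Fintype.card_fun, ZMod.card]
      have h2 : ((2 : ℕ) ^ m : ℝ) ≤ (2 : ℝ) ^ (((t : ℝ) + 1) / 2) := by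
        push_cast
        rw [← Real.rpow_natCast 2 m]
        apply Real.rpow_le_rpow_of_exponent_le (by norm_num)
        have : 2 * m ≤ t + 1 := by omega
        have : (2 : ℝ) * (m : ℝ) ≤ (t : ℝ) + 1 := by exact_mod_cast this
        linarith
      calc ((coset p).card : ℝ) ≤ ((2 : ℕ) ^ m : ℝ) := by exact_mod_cast h1
        _ ≤ (2 : ℝ) ^ (((t : ℝ) + 1) / 2) := h2
    · -- covering property
      intro A hA
      rcases A.eq_empty_or_nonempty with rfl | ⟨v0, hv0⟩
      · exact ⟨coset (0, 0), Finset.mem_image_of_mem _ (Finset.mem_univ _),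
          Finset.empty_subset _⟩
      · have hone : ∀ x : ZMod 2, x ≠ 0 → x = 1 := by decide
        set S : Set (Fin t → ZMod 2) := (fun v => v + v0) '' (A : Set (Fin t → ZMod 2)) with hSdef
        have hS : ∀ x ∈ S, ∀ y ∈ S, ip x y = 0 := by
          rintro x ⟨a, ha, rfl⟩ y ⟨b, hb, rfl⟩
          rw [ip_add_add]
          rw [hone _ (hA a ha b hb), hone _ (hA a ha v0 hv0),
            hone _ (hA v0 hv0 b hb), hone _ (hA v0 hv0 v0 hv0)]
          decide
        set W := Submodule.span (ZMod 2) S with hW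
        have hrank : Module.finrank (ZMod 2) W ≤ m := by
          have h2 : 2 * Module.finrank (ZMod 2) W ≤ t := isotropic_finrank_le t S hS
          omega
        obtain ⟨g, hg⟩ := exists_spanning_fun W m hrank
        refine ⟨coset (v0, g), Finset.mem_image_of_mem _ (Finset.mem_univ _), ?_⟩
        intro a ha
        have hmem : a + v0 ∈ W := Submodule.subset_span ⟨a, ha, rfl⟩
        rw [← hg] at hmem
        obtain ⟨c, hc⟩ := (Submodule.mem_span_range_iff_exists_fun (ZMod 2)).mp hmem
        have hself : ∀ x : Fin t → ZMod 2, x + x = 0 := by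
          intro x
          funext i
          exact (by decide : ∀ y : ZMod 2, y + y = 0) (x i)
        have : v0 + ∑ i, c i • g i = a := by
          rw [hc, add_comm a v0, ← add_assoc, hself v0, zero_add]
        simp only [hcoset, Finset.mem_image]
        exact ⟨c, Finset.mem_univ c, this⟩
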